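/- The function θ ↦ π_θ^T r with π_θ = softmax(Xθ) is β-smooth with β = (9/2)·‖r‖_∞·λ_max(X^T X): for all θ, θ' ∈ ℝ^d, |(π_{θ'} - π_θ)^T r - ⟨∇(π_θ^T r), θ' - θ⟩| ≤ (9/4)·‖r‖_∞·λ_max(X^T X)·‖θ' - θ‖²₂. -/

import Mathlib

open Matrix

noncomputable def softmaxPolicy {K d : ℕ} (X : Matrix (Fin K) (Fin d) ℝ)
    (θ : Fin d → ℝ) (a : Fin K) : ℝ :=
  Real.exp ((X *ᵥ θ) a) / ∑ a', Real.exp ((X *ᵥ θ) a')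

section Aux

lemma rayleigh_le {d : ℕ} {A : Matrix (Fin d) (Fin d) ℝ} (hA : A.IsHermitian)
    (u : Fin d → ℝ) :
    u ⬝ᵥ (A *ᵥ u) ≤ (⨆ i, hA.eigenvalues i) * ∑ i, u i ^ 2 := by
  set U : Matrix (Fin d) (Fin d) ℝ := (hA.eigenvectorUnitary : Matrix (Fin d) (Fin d) ℝ) with hU
  set y : Fin d → ℝ := star U *ᵥ u with hy
  have hstar : star U = Uᵀ := by
    ext i j; simp [Matrix.star_eq_conjTranspose, Matrix.conjTranspose_apply]
  have hmem : U * star U = 1 := Matrix.mem_unitaryGroup_iff.mp hA.eigenvectorUnitary.2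
  have hUy : U *ᵥ y = u := by
    rw [hy, Matrix.mulVec_mulVec, hmem, Matrix.one_mulVec]
  have hyvm : u ᵥ* U = y := by rw [hy, hstar, Matrix.mulVec_transpose]
  have key : u ⬝ᵥ (A *ᵥ u) = ∑ i, hA.eigenvalues i * y i ^ 2 := by
    conv_lhs => rw [hA.spectral_theorem, Unitary.conjStarAlgAut_apply]
    rw [← hU, Matrix.mul_assoc, ← Matrix.mulVec_mulVec, Matrix.dotProduct_mulVec, hyvm,
      ← Matrix.mulVec_mulVec]
    simp only [dotProduct, Matrix.mulVec_diagonal]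
    exact Finset.sum_congr rfl fun i _ => by simp [RCLike.ofReal]; ring
  have kn : ∑ i, y i ^ 2 = ∑ i, u i ^ 2 := by
    have h1 : y ⬝ᵥ y = u ⬝ᵥ u := by
      conv_lhs => rw [hy]
      rw [hstar, Matrix.dotProduct_mulVec, Matrix.vecMul_transpose, Matrix.mulVec_mulVec,
        ← hstar, hmem, Matrix.one_mulVec]
    simpa [dotProduct, pow_two] using h1
  rw [key, ← kn, Finset.mul_sum]
  apply Finset.sum_le_sum
  intro i _
  have hle : hA.eigenvalues i ≤ ⨆ j, hA.eigenvalues j :=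
    le_ciSup (Set.Finite.bddAbove (Set.finite_range _)) i
  exact mul_le_mul_of_nonneg_right hle (sq_nonneg _)

lemma key_bound {K : ℕ} (q r c : Fin K → ℝ) (hq0 : ∀ a, 0 ≤ q a) (hq1 : ∑ a, q a = 1)
    {R : ℝ} (hR : ∀ a, |r a| ≤ R) :
    |(∑ a, q a * (r a * c a ^ 2)) - (∑ a, q a * r a) * (∑ a, q a * c a ^ 2)
      - 2 * (∑ a, q a * c a) * ((∑ a, q a * (r a * c a)) - (∑ a, q a * r a) * (∑ a, q a * c a))|
      ≤ 2 * R * ∑ a, c a ^ 2 := by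
  have hne : Nonempty (Fin K) := by
    by_contra h
    simp [not_nonempty_iff.mp h] at hq1
  have hR0 : 0 ≤ R := le_trans (abs_nonneg (r (Classical.arbitrary (Fin K)))) (hR _)
  set s := ∑ a, q a * c a with hs
  set V := ∑ a, q a * (c a - s) ^ 2 with hV
  have hV0 : 0 ≤ V := Finset.sum_nonneg fun a _ => mul_nonneg (hq0 a) (sq_nonneg _)
  have hVeq : V = (∑ a, q a * c a ^ 2) - s ^ 2 := by
    have : ∀ a : Fin K, q a * (c a - s) ^ 2
        = q a * c a ^ 2 - 2 * s * (q a * c a) + s ^ 2 * q a := fun a => by ring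
    rw [hV, Finset.sum_congr rfl fun a _ => this a, Finset.sum_add_distrib,
      Finset.sum_sub_distrib, ← Finset.mul_sum, ← Finset.mul_sum, ← hs, hq1]
    ring
  have hVle : V ≤ ∑ a, c a ^ 2 := by
    rw [hVeq]
    have h1 : ∑ a, q a * c a ^ 2 ≤ ∑ a, c a ^ 2 :=
      Finset.sum_le_sum fun a _ => by
        have hq1a : q a ≤ 1 := by
          rw [← hq1]
          exact Finset.single_le_sum (fun b _ => hq0 b) (Finset.mem_univ a)
        nlinarith [sq_nonneg (c a), hq0 a]
    nlinarith [sq_nonneg s]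
  have hmain : (∑ a, q a * (r a * c a ^ 2)) - (∑ a, q a * r a) * (∑ a, q a * c a ^ 2)
      - 2 * (∑ a, q a * c a) * ((∑ a, q a * (r a * c a)) - (∑ a, q a * r a) * (∑ a, q a * c a))
      = (∑ a, q a * (r a * (c a - s) ^ 2)) - (∑ a, q a * r a) * V := by
    have h2 : ∑ a, q a * (r a * (c a - s) ^ 2)
        = (∑ a, q a * (r a * c a ^ 2)) - 2 * s * (∑ a, q a * (r a * c a))
          + s ^ 2 * (∑ a, q a * r a) := by
      have : ∀ a : Fin K, q a * (r a * (c a - s) ^ 2)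
          = q a * (r a * c a ^ 2) - 2 * s * (q a * (r a * c a)) + s ^ 2 * (q a * r a) :=
        fun a => by ring
      rw [Finset.sum_congr rfl fun a _ => this a, Finset.sum_add_distrib,
        Finset.sum_sub_distrib, ← Finset.mul_sum, ← Finset.mul_sum]
    rw [h2, hVeq, ← hs]; ring
  rw [hmain]
  have hb1 : |∑ a, q a * (r a * (c a - s) ^ 2)| ≤ R * V := by
    calc |∑ a, q a * (r a * (c a - s) ^ 2)| ≤ ∑ a, |q a * (r a * (c a - s) ^ 2)| :=
          Finset.abs_sum_le_sum_abs _ _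
      _ ≤ ∑ a, R * (q a * (c a - s) ^ 2) := by
          apply Finset.sum_le_sum
          intro a _
          rw [abs_mul, abs_mul, abs_of_nonneg (hq0 a), abs_of_nonneg (sq_nonneg (c a - s))]
          calc q a * (|r a| * (c a - s) ^ 2) ≤ q a * (R * (c a - s) ^ 2) := by
                exact mul_le_mul_of_nonneg_left
                  (mul_le_mul_of_nonneg_right (hR a) (sq_nonneg _)) (hq0 a)
            _ = R * (q a * (c a - s) ^ 2) := by ring
      _ = R * V := by rw [← Finset.mul_sum]
  have hb2 : |∑ a, q a * r a| ≤ R := by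
    calc |∑ a, q a * r a| ≤ ∑ a, |q a * r a| := Finset.abs_sum_le_sum_abs _ _
      _ ≤ ∑ a, q a * R := Finset.sum_le_sum fun a _ => by
          rw [abs_mul, abs_of_nonneg (hq0 a)]
          exact mul_le_mul_of_nonneg_left (hR a) (hq0 a)
      _ = R := by rw [← Finset.sum_mul, hq1, one_mul]
  calc |(∑ a, q a * (r a * (c a - s) ^ 2)) - (∑ a, q a * r a) * V|
      ≤ |∑ a, q a * (r a * (c a - s) ^ 2)| + |(∑ a, q a * r a) * V| := abs_sub _ _
    _ ≤ R * V + R * V := by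
        refine add_le_add hb1 ?_
        rw [abs_mul, abs_of_nonneg hV0]
        exact mul_le_mul_of_nonneg_right hb2 hV0
    _ = 2 * R * V := by ring
    _ ≤ 2 * R * ∑ a, c a ^ 2 := mul_le_mul_of_nonneg_left hVle (by positivity)

noncomputable def Sfun {K : ℕ} (b c w : Fin K → ℝ) (t : ℝ) : ℝ :=
  ∑ a, w a * Real.exp (b a + t * c a)

lemma hasDerivAt_Sfun {K : ℕ} (b c w : Fin K → ℝ) (t : ℝ) :
    HasDerivAt (Sfun b c w) (Sfun b c (fun a => w a * c a) t) t := by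
  unfold Sfun
  apply HasDerivAt.fun_sum
  intro a _
  have h1 : HasDerivAt (fun t : ℝ => b a + t * c a) (c a) t := by
    simpa using (hasDerivAt_mul_const (c a)).const_add (b a)
  have h2 := (h1.exp).const_mul (w a)
  convert h2 using 1
  · rfl
  ring

lemma Sfun_pos {K : ℕ} [Nonempty (Fin K)] (b c : Fin K → ℝ) (t : ℝ) :
    0 < Sfun b c 1 t := by
  unfold Sfun
  exact Finset.sum_pos (fun a _ => by simpa using Real.exp_pos (b a + t * c a))
    Finset.univ_nonempty

lemma sum_q_mul {K : ℕ} (b c w : Fin K → ℝ) (t : ℝ) :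
    ∑ a, Real.exp (b a + t * c a) / Sfun b c 1 t * w a = Sfun b c w t / Sfun b c 1 t := by
  simp only [div_mul_eq_mul_div]
  rw [← Finset.sum_div]
  congr 1
  unfold Sfun
  exact Finset.sum_congr rfl fun a _ => mul_comm _ _

end Aux

theorem smoothness_expected_reward {K d : ℕ} (X : Matrix (Fin K) (Fin d) ℝ)
    (r : Fin K → ℝ) (hX : (Xᵀ * X).IsHermitian) :
    ∀ θ θ' : Fin d → ℝ,
      |(∑ a, (softmaxPolicy X θ' a - softmaxPolicy X θ a) * r a) -
          (Xᵀ *ᵥ ((Matrix.diagonal (softmaxPolicy X θ) -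
            Matrix.vecMulVec (softmaxPolicy X θ) (softmaxPolicy X θ)) *ᵥ r)) ⬝ᵥ (θ' - θ)| ≤
        9 / 4 * (⨆ a, |r a|) * (⨆ i, hX.eigenvalues i) * ∑ i, (θ' i - θ i) ^ 2 := by
  intro θ θ'
  rcases Nat.eq_zero_or_pos K with hK | hK
  · subst hK
    have h1 : (⨆ a : Fin 0, |r a|) = 0 := Real.iSup_of_isEmpty _
    simp [Matrix.mulVec, dotProduct, h1]
  haveI : Nonempty (Fin K) := ⟨⟨0, hK⟩⟩
  set u : Fin d → ℝ := θ' - θ with hu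
  set b : Fin K → ℝ := X *ᵥ θ with hb
  set c : Fin K → ℝ := X *ᵥ u with hc
  set R : ℝ := ⨆ a, |r a| with hRdef
  set L : ℝ := ⨆ i, hX.eigenvalues i with hLdef
  have hR : ∀ a, |r a| ≤ R := by
    intro a
    rw [hRdef]
    exact le_ciSup (Set.Finite.bddAbove (Set.finite_range fun a => |r a|)) a
  have hR0 : 0 ≤ R := le_trans (abs_nonneg (r (Classical.arbitrary (Fin K)))) (hR _)
  have hL0 : 0 ≤ L := by
    rcases isEmpty_or_nonempty (Fin d) with hd | hd
    · rw [hLdef, Real.iSup_of_isEmpty]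
    · have hpsd : (Xᵀ * X).PosSemidef := by
        have h := Matrix.posSemidef_conjTranspose_mul_self X
        have he : Xᴴ = Xᵀ := by
          ext i j; simp [Matrix.conjTranspose_apply]
        rwa [he] at h
      rw [hLdef]
      exact le_trans (hpsd.eigenvalues_nonneg (Classical.arbitrary _))
        (le_ciSup (Set.Finite.bddAbove (Set.finite_range hX.eigenvalues)) _)
  -- abbreviations
  set A : ℝ → ℝ := Sfun b c r with hA
  set B : ℝ → ℝ := Sfun b c 1 with hB
  set A1 : ℝ → ℝ := Sfun b c (fun a => r a * c a) with hA1
  set B1 : ℝ → ℝ := Sfun b c c with hB1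
  set A2 : ℝ → ℝ := Sfun b c (fun a => r a * c a ^ 2) with hA2
  set B2 : ℝ → ℝ := Sfun b c (fun a => c a ^ 2) with hB2
  have hBpos : ∀ t, 0 < B t := fun t => Sfun_pos b c t
  set g : ℝ → ℝ := fun t => A t / B t with hg
  set g1 : ℝ → ℝ := fun t => (A1 t * B t - A t * B1 t) / (B t) ^ 2 with hg1
  set g2 : ℝ → ℝ := fun t =>
    ((A2 t * B t - A t * B2 t) * B t - 2 * (A1 t * B t - A t * B1 t) * B1 t) / (B t) ^ 3
    with hg2
  -- derivatives
  have hDB : ∀ t, HasDerivAt B (B1 t) t := by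
    intro t
    have h := hasDerivAt_Sfun b c 1 t
    rwa [show (fun a => (1 : Fin K → ℝ) a * c a) = c from funext fun a => by simp] at h
  have hDA : ∀ t, HasDerivAt A (A1 t) t := fun t => hasDerivAt_Sfun b c r t
  have hDA1 : ∀ t, HasDerivAt A1 (A2 t) t := by
    intro t
    have h := hasDerivAt_Sfun b c (fun a => r a * c a) t
    rwa [show (fun a => (r a * c a) * c a) = fun a => r a * c a ^ 2 from
      funext fun a => by ring] at h
  have hDB1 : ∀ t, HasDerivAt B1 (B2 t) t := by
    intro t
    have h := hasDerivAt_Sfun b c c t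
    rwa [show (fun a => c a * c a) = fun a => c a ^ 2 from funext fun a => by ring] at h
  have hDg : ∀ t, HasDerivAt g (g1 t) t := fun t =>
    (hDA t).div (hDB t) (hBpos t).ne'
  have hDg1 : ∀ t, HasDerivAt g1 (g2 t) t := by
    intro t
    have hN : HasDerivAt (fun t => A1 t * B t - A t * B1 t)
        (A2 t * B t + A1 t * B1 t - (A1 t * B1 t + A t * B2 t)) t :=
      ((hDA1 t).mul (hDB t)).sub ((hDA t).mul (hDB1 t))
    have hD : HasDerivAt (fun t => (B t) ^ 2) ((2 : ℕ) * (B t) ^ 1 * B1 t) t :=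
      (hDB t).pow 2
    have h := hN.div hD (pow_ne_zero 2 (hBpos t).ne')
    convert h using 1
    · rfl
    · rfl
    · rfl
    rw [hg2, div_eq_div_iff (pow_ne_zero 3 (hBpos t).ne')
      (pow_ne_zero 2 (pow_ne_zero 2 (hBpos t).ne'))]
    push_cast
    ring
  -- bound on second derivative
  set C : ℝ := 2 * R * ∑ a, c a ^ 2 with hC
  have hbound : ∀ t : ℝ, |g2 t| ≤ C := by
    intro t
    have hq0 : ∀ a, 0 ≤ Real.exp (b a + t * c a) / B t := fun a =>
      div_nonneg (Real.exp_pos _).le (hBpos t).le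
    have hq1 : ∑ a, Real.exp (b a + t * c a) / B t = 1 := by
      rw [← Finset.sum_div]
      rw [div_eq_one_iff_eq (hBpos t).ne']
      rw [hB]
      unfold Sfun
      exact Finset.sum_congr rfl fun a _ => (one_mul _).symm
    have h := key_bound (fun a => Real.exp (b a + t * c a) / B t) r c hq0 hq1 hR
    beta_reduce at h
    have e1 : ∑ a, Real.exp (b a + t * c a) / B t * (r a * c a ^ 2) = A2 t / B t :=
      sum_q_mul b c _ t
    have e2 : ∑ a, Real.exp (b a + t * c a) / B t * r a = A t / B t :=
      sum_q_mul b c _ t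
    have e3 : ∑ a, Real.exp (b a + t * c a) / B t * c a ^ 2 = B2 t / B t :=
      sum_q_mul b c _ t
    have e4 : ∑ a, Real.exp (b a + t * c a) / B t * c a = B1 t / B t :=
      sum_q_mul b c _ t
    have e5 : ∑ a, Real.exp (b a + t * c a) / B t * (r a * c a) = A1 t / B t :=
      sum_q_mul b c _ t
    rw [e1, e2, e3, e4, e5] at h
    have hexpr : g2 t = A2 t / B t - A t / B t * (B2 t / B t)
        - 2 * (B1 t / B t) * (A1 t / B t - A t / B t * (B1 t / B t)) := by
      have hB0 := (hBpos t).ne'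
      rw [hg2]
      field_simp
    rw [hexpr]
    exact h
  have hC0 : 0 ≤ C := by
    rw [hC]
    positivity
  -- MVT twice
  have step1 : ∀ t ∈ Set.Icc (0 : ℝ) 1, |g1 t - g1 0| ≤ C := by
    intro t ht
    have h := Convex.norm_image_sub_le_of_norm_hasDerivWithin_le
      (f := g1) (f' := g2) (s := Set.Icc (0 : ℝ) 1)
      (fun x _ => (hDg1 x).hasDerivWithinAt)
      (fun x _ => by rw [Real.norm_eq_abs]; exact hbound x)
      (convex_Icc 0 1) (Set.left_mem_Icc.mpr zero_le_one) ht
    rw [Real.norm_eq_abs, Real.norm_eq_abs] at h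
    calc |g1 t - g1 0| ≤ C * |t - 0| := h
      _ ≤ C * 1 := by
          apply mul_le_mul_of_nonneg_left _ hC0
          rw [sub_zero, abs_of_nonneg ht.1]
          exact ht.2
      _ = C := mul_one C
  have step2 : |g 1 - g 0 - g1 0| ≤ C := by
    have hF : ∀ t : ℝ, HasDerivAt (fun t => g t - t * g1 0) (g1 t - g1 0) t := fun t =>
      (hDg t).sub (hasDerivAt_mul_const (g1 0))
    have h := Convex.norm_image_sub_le_of_norm_hasDerivWithin_le
      (f := fun t => g t - t * g1 0) (f' := fun t => g1 t - g1 0) (s := Set.Icc (0 : ℝ) 1)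
      (fun x _ => (hF x).hasDerivWithinAt)
      (fun x hx => by rw [Real.norm_eq_abs]; exact step1 x hx)
      (convex_Icc 0 1) (Set.left_mem_Icc.mpr zero_le_one)
      (Set.right_mem_Icc.mpr zero_le_one)
    rw [Real.norm_eq_abs] at h
    have h2 : |g 1 - g1 0 - g 0| ≤ C := by simpa using h
    rw [show g 1 - g 0 - g1 0 = g 1 - g1 0 - g 0 by ring]
    exact h2
  -- identify g with softmax sums
  have hzt : ∀ t : ℝ, X *ᵥ (θ + t • u) = fun a => b a + t * c a := by
    intro t
    funext a
    rw [Matrix.mulVec_add, Matrix.mulVec_smul]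
    simp [hb, hc]
  have hθ'' : X *ᵥ θ' = fun a => b a + 1 * c a := by
    have : θ' = θ + (1 : ℝ) • u := by
      rw [one_smul, hu]
      abel
    rw [this, hzt 1]
  have hθ0 : X *ᵥ θ = fun a => b a + 0 * c a := by
    have : θ = θ + (0 : ℝ) • u := by simp
    conv_lhs => rw [this]
    rw [hzt 0]
  have hπ' : ∀ a, softmaxPolicy X θ' a = Real.exp (b a + 1 * c a) / B 1 := by
    intro a
    unfold softmaxPolicy
    rw [hθ'', hB]
    unfold Sfun
    congr 1
    exact Finset.sum_congr rfl fun a' _ => (one_mul _).symm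
  have hπ : ∀ a, softmaxPolicy X θ a = Real.exp (b a + 0 * c a) / B 0 := by
    intro a
    unfold softmaxPolicy
    rw [hθ0, hB]
    unfold Sfun
    congr 1
    exact Finset.sum_congr rfl fun a' _ => (one_mul _).symm
  have hsum : ∑ a, (softmaxPolicy X θ' a - softmaxPolicy X θ a) * r a = g 1 - g 0 := by
    have h1 : ∑ a, softmaxPolicy X θ' a * r a = g 1 := by
      simp only [hπ']
      exact sum_q_mul b c r 1
    have h0 : ∑ a, softmaxPolicy X θ a * r a = g 0 := by
      simp only [hπ]
      exact sum_q_mul b c r 0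
    rw [← h1, ← h0, ← Finset.sum_sub_distrib]
    exact Finset.sum_congr rfl fun a _ => by ring
  -- identify gradient
  have hgrad : (Xᵀ *ᵥ ((Matrix.diagonal (softmaxPolicy X θ) -
      Matrix.vecMulVec (softmaxPolicy X θ) (softmaxPolicy X θ)) *ᵥ r)) ⬝ᵥ u = g1 0 := by
    rw [Matrix.mulVec_transpose, ← Matrix.dotProduct_mulVec, ← hc]
    have hv : ∀ a, ((Matrix.diagonal (softmaxPolicy X θ) -
        Matrix.vecMulVec (softmaxPolicy X θ) (softmaxPolicy X θ)) *ᵥ r) a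
        = softmaxPolicy X θ a * r a
          - softmaxPolicy X θ a * ∑ a', softmaxPolicy X θ a' * r a' := by
      intro a
      rw [Matrix.sub_mulVec]
      simp only [Pi.sub_apply, Matrix.mulVec_diagonal]
      congr 1
      simp only [Matrix.mulVec, dotProduct, Matrix.vecMulVec_apply]
      rw [Finset.mul_sum]
      exact Finset.sum_congr rfl fun a' _ => by ring
    have hS : ∑ a', softmaxPolicy X θ a' * r a' = A 0 / B 0 := by
      simp only [hπ]
      exact sum_q_mul b c r 0
    have hPC : ∑ a, softmaxPolicy X θ a * c a = B1 0 / B 0 := by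
      simp only [hπ]
      exact sum_q_mul b c c 0
    have hPRC : ∑ a, softmaxPolicy X θ a * (r a * c a) = A1 0 / B 0 := by
      simp only [hπ]
      exact sum_q_mul b c _ 0
    calc ((Matrix.diagonal (softmaxPolicy X θ) -
          Matrix.vecMulVec (softmaxPolicy X θ) (softmaxPolicy X θ)) *ᵥ r) ⬝ᵥ c
        = ∑ a, (softmaxPolicy X θ a * r a
            - softmaxPolicy X θ a * ∑ a', softmaxPolicy X θ a' * r a') * c a := by
          exact Finset.sum_congr rfl fun a _ => by rw [hv a]
      _ = (∑ a, softmaxPolicy X θ a * (r a * c a))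
          - (∑ a', softmaxPolicy X θ a' * r a') * ∑ a, softmaxPolicy X θ a * c a := by
          conv_rhs => rw [Finset.mul_sum]
          rw [← Finset.sum_sub_distrib]
          exact Finset.sum_congr rfl fun a _ => by ring
      _ = A1 0 / B 0 - A 0 / B 0 * (B1 0 / B 0) := by rw [hPRC, hS, hPC]
      _ = g1 0 := by
          have hB0 := (hBpos 0).ne'
          rw [hg1]
          field_simp
  -- spectral bound
  have hcs : ∑ a, c a ^ 2 ≤ L * ∑ i, u i ^ 2 := by
    have h1 : u ⬝ᵥ ((Xᵀ * X) *ᵥ u) = ∑ a, c a ^ 2 := by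
      rw [← Matrix.mulVec_mulVec, Matrix.dotProduct_mulVec, Matrix.vecMul_transpose, ← hc]
      simp [dotProduct, pow_two]
    have h2 := rayleigh_le hX u
    rw [h1, ← hLdef] at h2
    exact h2
  -- finish
  have husq : ∑ i, (θ' i - θ i) ^ 2 = ∑ i, u i ^ 2 :=
    Finset.sum_congr rfl fun i _ => by rw [hu]; simp
  rw [hsum, hgrad, husq]
  have husq0 : (0 : ℝ) ≤ ∑ i, u i ^ 2 := Finset.sum_nonneg fun i _ => sq_nonneg _
  calc |g 1 - g 0 - g1 0| ≤ C := step2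
    _ = 2 * R * ∑ a, c a ^ 2 := hC
    _ ≤ 2 * R * (L * ∑ i, u i ^ 2) := mul_le_mul_of_nonneg_left hcs (by positivity)
    _ ≤ 9 / 4 * R * L * ∑ i, u i ^ 2 := by nlinarith [mul_nonneg hL0 husq0, mul_nonneg hR0 (mul_nonneg hL0 husq0)]
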